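/- arXiv:1304.5762 — 11 statements merged into one kernel-verified Lean document; each statement's English description precedes it below -/
import Mathlib

section
/- Let λ, μ, ν be complex numbers of modulus 1 such that λ = aμ + bν for some nonnegative reals a, b. Then for every ε > 0 there exists a matrix E with all entries of modulus less than ε such that diag(λ,0) + E is *congruent to diag(μ,ν). -/
open Matrix

theorem arrow_diag_lambda0_to_diag_mu_nu (lam μ ν : ℂ)
    (hlam : ‖lam‖ = 1) (hμ : ‖μ‖ = 1) (hν : ‖ν‖ = 1)
    (a b : ℝ) (ha : 0 ≤ a) (hb : 0 ≤ b) (hab : lam = (a : ℂ) * μ + (b : ℂ) * ν) :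
    ∀ ε : ℝ, 0 < ε → ∃ E : Matrix (Fin 2) (Fin 2) ℂ,
      (∀ i j, ‖E i j‖ < ε) ∧
      ∃ S : Matrix (Fin 2) (Fin 2) ℂ, S.det ≠ 0 ∧
        Sᴴ * (!![lam, 0; 0, 0] + E) * S = !![μ, 0; 0, ν] := by
  intro ε hε
  set r := Real.sqrt a with hr
  set s := Real.sqrt b with hs
  have hr0 : 0 ≤ r := Real.sqrt_nonneg a
  have hs0 : 0 ≤ s := Real.sqrt_nonneg b
  have hr2 : r ^ 2 = a := Real.sq_sqrt ha
  have hs2 : s ^ 2 = b := Real.sq_sqrt hb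
  have hc1 : (1:ℝ) ≤ a + b := by
    have h1 : ‖lam‖ ≤ ‖(a:ℂ)*μ‖ + ‖(b:ℂ)*ν‖ := by
      rw [hab]; exact norm_add_le _ _
    rw [hlam] at h1
    simpa [_root_.map_mul, Complex.norm_real, hμ, hν, abs_of_nonneg ha, abs_of_nonneg hb] using h1
  set t : ℝ := min 1 (ε / (a + b + 1)) with htdef
  have hcpos : (0:ℝ) < a + b + 1 := by linarith
  have ht0 : 0 < t := lt_min one_pos (div_pos hε hcpos)
  have ht1 : t ≤ 1 := min_le_left _ _
  have htc : t * (a + b) < ε := by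
    have h2 : t ≤ ε / (a + b + 1) := min_le_right _ _
    have h3 : t * (a + b) ≤ (ε / (a + b + 1)) * (a + b) := by
      apply mul_le_mul_of_nonneg_right h2 (by linarith)
    have h4 : (ε / (a + b + 1)) * (a + b) < ε := by
      rw [div_mul_eq_mul_div, div_lt_iff₀ hcpos]
      nlinarith
    linarith
  -- matrices
  set T : Matrix (Fin 2) (Fin 2) ℂ :=
    !![(r:ℂ), (t:ℂ)*s; (s:ℂ), -((t:ℂ)*r)] with hT
  have hTH : Tᴴ = !![(r:ℂ), (s:ℂ); (t:ℂ)*s, -((t:ℂ)*r)] := by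
    ext i j
    fin_cases i <;> fin_cases j <;>
      simp [hT, conjTranspose_apply, Complex.conj_ofReal]
  have hra : (r:ℂ) * r = (a:ℂ) := by
    have : ((r^2 : ℝ) : ℂ) = (a:ℂ) := by exact_mod_cast congrArg Complex.ofReal hr2
    push_cast at this; linear_combination this
  have hsb : (s:ℂ) * s = (b:ℂ) := by
    have : ((s^2 : ℝ) : ℂ) = (b:ℂ) := by exact_mod_cast congrArg Complex.ofReal hs2
    push_cast at this; linear_combination this
  set E : Matrix (Fin 2) (Fin 2) ℂ :=
    !![0, (t:ℂ)*r*s*(μ-ν); (t:ℂ)*r*s*(μ-ν), (t:ℂ)^2*((b:ℂ)*μ+(a:ℂ)*ν)] with hE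
  have key : !![lam, 0; 0, 0] + E = Tᴴ * !![μ, 0; 0, ν] * T := by
    rw [hTH]
    ext i j
    fin_cases i <;> fin_cases j
    · simp [hT, hE, Matrix.mul_apply, Fin.sum_univ_two]
      linear_combination hab - μ*hra - ν*hsb
    · simp [hT, hE, Matrix.mul_apply, Fin.sum_univ_two]
      ring
    · simp [hT, hE, Matrix.mul_apply, Fin.sum_univ_two]
      ring
    · simp [hT, hE, Matrix.mul_apply, Fin.sum_univ_two]
      linear_combination -(t:ℂ)^2*μ*hsb - (t:ℂ)^2*ν*hra
  have hdetT : T.det = -((t:ℂ) * ((a:ℂ) + b)) := by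
    simp [hT, Matrix.det_fin_two_of]
    ring_nf
    linear_combination (-(t:ℂ)) * hra + (-(t:ℂ)) * hsb
  have hdet_ne : T.det ≠ 0 := by
    rw [hdetT]
    intro h
    have h2 : (t:ℂ) * ((a:ℂ) + b) = 0 := by linear_combination -h
    rcases mul_eq_zero.mp h2 with h3 | h3
    · exact (ne_of_gt ht0) (by exact_mod_cast h3)
    · have : ((a + b : ℝ) : ℂ) = 0 := by push_cast; linear_combination h3
      have : (a + b : ℝ) = 0 := by exact_mod_cast this
      linarith
  have hu : IsUnit T.det := isUnit_iff_ne_zero.mpr hdet_ne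
  refine ⟨E, ?_, T⁻¹, ?_, ?_⟩
  · -- bounds
    have habs_sub : ‖μ - ν‖ ≤ 2 := by
      have h := norm_sub_le μ ν
      rw [hμ, hν] at h; linarith
    have hrsle : 2 * (r * s) ≤ a + b := by nlinarith [sq_nonneg (r - s)]
    have hoff : ‖(t:ℂ)*r*s*(μ-ν)‖ < ε := by
      have : ‖(t:ℂ)*r*s*(μ-ν)‖ = t * r * s * ‖μ - ν‖ := by
        simp [_root_.map_mul, Complex.norm_real, abs_of_nonneg ht0.le, abs_of_nonneg hr0,
          abs_of_nonneg hs0]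
      rw [this]
      have h5 : t * r * s * ‖μ - ν‖ ≤ t * r * s * 2 := by
        apply mul_le_mul_of_nonneg_left habs_sub (by positivity)
      nlinarith [norm_nonneg (μ - ν)]
    have h6 : ‖(b:ℂ)*μ + (a:ℂ)*ν‖ ≤ b + a := by
      calc ‖(b:ℂ)*μ + (a:ℂ)*ν‖
          ≤ ‖(b:ℂ)*μ‖ + ‖(a:ℂ)*ν‖ := norm_add_le _ _
        _ = b + a := by
            simp [_root_.map_mul, Complex.norm_real, hμ, hν, abs_of_nonneg ha, abs_of_nonneg hb]
    have h7 : ‖(t:ℂ)^2*((b:ℂ)*μ+(a:ℂ)*ν)‖ < ε := by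
      have heq : ‖(t:ℂ)^2*((b:ℂ)*μ+(a:ℂ)*ν)‖ = t^2 * ‖(b:ℂ)*μ+(a:ℂ)*ν‖ := by
        simp [_root_.map_mul, map_pow, Complex.norm_real, abs_of_nonneg ht0.le]
      rw [heq]
      have h8 : t^2 * ‖(b:ℂ)*μ+(a:ℂ)*ν‖ ≤ t^2 * (b + a) :=
        mul_le_mul_of_nonneg_left h6 (sq_nonneg t)
      nlinarith
    intro i j
    fin_cases i <;> fin_cases j
    · simpa [hE] using hε
    · simpa [hE] using hoff
    · simpa [hE] using hoff
    · simpa [hE] using h7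
  · -- det S ≠ 0
    rw [Matrix.det_nonsing_inv]
    simpa using hdet_ne
  · -- congruence
    rw [key, Matrix.conjTranspose_nonsing_inv]
    have huH : IsUnit Tᴴ.det := by
      rw [Matrix.det_conjTranspose]; exact hu.star
    calc (Tᴴ)⁻¹ * (Tᴴ * !![μ, 0; 0, ν] * T) * T⁻¹
        = (Tᴴ)⁻¹ * (Tᴴ * (!![μ, 0; 0, ν] * T)) * T⁻¹ := by rw [Matrix.mul_assoc Tᴴ]
      _ = (!![μ, 0; 0, ν] * T) * T⁻¹ := by rw [Matrix.nonsing_inv_mul_cancel_left _ _ huH]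
      _ = !![μ, 0; 0, ν] := Matrix.mul_nonsing_inv_cancel_right _ _ hu
end

section
/- Let λ, μ, ν be unimodular complex numbers. If for every ε > 0 there exists a matrix E with all entries of modulus less than ε such that diag(λ,0) + E is *congruent to diag(μ,ν), then λ = aμ + bν for some nonnegative real numbers a and b. -/
open Matrix

private lemma real_eq_zero_of_forall {x : ℝ} (h : ∀ ε : ℝ, 0 < ε → |x| ≤ ε) : x = 0 := by
  by_contra hx
  have h0 : 0 < |x| := abs_pos.mpr hx
  have := h (|x|/2) (by linarith)
  linarith

private lemma real_nonneg_of_forall {x : ℝ} (h : ∀ ε : ℝ, 0 < ε → -ε ≤ x) : 0 ≤ x := by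
  by_contra hx
  push_neg at hx
  have := h (-x/2) (by linarith)
  linarith

private lemma combo_bound {x y u v C : ℝ} (hx : |x| ≤ C) (hy : |y| ≤ C)
    (hu : |u| ≤ 1) (hv : |v| ≤ 1) : |x*u - y*v| ≤ 2*C := by
  have hC : (0:ℝ) ≤ C := le_trans (abs_nonneg x) hx
  have h1 : |x*u| ≤ C := by
    rw [abs_mul]
    have := mul_le_mul hx hu (abs_nonneg u) hC
    linarith
  have h2 : |y*v| ≤ C := by
    rw [abs_mul]
    have := mul_le_mul hy hv (abs_nonneg v) hC
    linarith
  have h3 := abs_sub (x*u) (y*v)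
  linarith

theorem arrow_diag_lambda0_to_diag_mu_nu_necessary (lam μ ν : ℂ)
    (hlam : ‖lam‖ = 1) (hμ : ‖μ‖ = 1) (hν : ‖ν‖ = 1)
    (h : ∀ ε : ℝ, 0 < ε → ∃ E : Matrix (Fin 2) (Fin 2) ℂ,
      (∀ i j, ‖E i j‖ < ε) ∧
      ∃ S : Matrix (Fin 2) (Fin 2) ℂ, S.det ≠ 0 ∧
        Sᴴ * (!![lam, 0; 0, 0] + E) * S = !![μ, 0; 0, ν]) :
    ∃ a b : ℝ, 0 ≤ a ∧ 0 ≤ b ∧ lam = (a : ℂ) * μ + (b : ℂ) * ν := by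
  -- basic unimodularity facts
  have hmsq : μ.re * μ.re + μ.im * μ.im = 1 := by
    have := Complex.sq_norm μ
    rw [hμ] at this
    simpa [Complex.normSq_apply] using this.symm
  have hnsq : ν.re * ν.re + ν.im * ν.im = 1 := by
    have := Complex.sq_norm ν
    rw [hν] at this
    simpa [Complex.normSq_apply] using this.symm
  have hmre : |μ.re| ≤ 1 := by rw [← hμ]; exact Complex.abs_re_le_norm μ
  have hmim : |μ.im| ≤ 1 := by rw [← hμ]; exact Complex.abs_im_le_norm μ
  have hnre : |ν.re| ≤ 1 := by rw [← hν]; exact Complex.abs_re_le_norm ν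
  have hnim : |ν.im| ≤ 1 := by rw [← hν]; exact Complex.abs_im_le_norm ν
  -- key extraction step
  have key : ∀ ε : ℝ, 0 < ε → ∃ e : ℂ, ‖e‖ < ε ∧
      ∃ a b : ℝ, 0 ≤ a ∧ 0 ≤ b ∧ lam + e = (a:ℂ) * μ + (b:ℂ) * ν := by
    intro ε hε
    obtain ⟨E, hE, S, hS, heq⟩ := h ε hε
    have hU : IsUnit S.det := isUnit_iff_ne_zero.mpr hS
    have h1 : S * S⁻¹ = 1 := Matrix.mul_nonsing_inv S hU
    have h2 : !![lam,0;0,0] + E = (S⁻¹)ᴴ * !![μ,0;0,ν] * S⁻¹ := by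
      calc !![lam,0;0,0] + E = (S*S⁻¹)ᴴ * ((!![lam,0;0,0] + E) * (S*S⁻¹)) := by
            rw [h1]; simp
        _ = (S⁻¹)ᴴ * ((Sᴴ * (!![lam,0;0,0] + E) * S) * S⁻¹) := by
            simp only [Matrix.conjTranspose_mul, Matrix.mul_assoc]
        _ = (S⁻¹)ᴴ * !![μ,0;0,ν] * S⁻¹ := by rw [heq, Matrix.mul_assoc]
    have h00 : (!![lam,0;0,0] + E) 0 0 = ((S⁻¹)ᴴ * !![μ,0;0,ν] * S⁻¹) 0 0 := by rw [← h2]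
    have hlhs : (!![lam,0;0,0] + E) 0 0 = lam + E 0 0 := by simp
    have hrhs : ((S⁻¹)ᴴ * !![μ,0;0,ν] * S⁻¹) 0 0 =
        (starRingEnd ℂ) (S⁻¹ 0 0) * μ * S⁻¹ 0 0 + (starRingEnd ℂ) (S⁻¹ 1 0) * ν * S⁻¹ 1 0 := by
      simp [Matrix.mul_apply, Fin.sum_univ_two, Matrix.conjTranspose_apply]
    refine ⟨E 0 0, hE 0 0, Complex.normSq (S⁻¹ 0 0), Complex.normSq (S⁻¹ 1 0),
      Complex.normSq_nonneg _, Complex.normSq_nonneg _, ?_⟩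
    rw [← hlhs, h00, hrhs, ← Complex.mul_conj, ← Complex.mul_conj]
    ring
  -- componentwise version
  have key2 : ∀ ε : ℝ, 0 < ε → ∃ a b : ℝ, 0 ≤ a ∧ 0 ≤ b ∧ ∃ e : ℂ,
      ‖e‖ < ε ∧ lam.re + e.re = a * μ.re + b * ν.re ∧
      lam.im + e.im = a * μ.im + b * ν.im := by
    intro ε hε
    obtain ⟨e, he, a, b, ha, hb, heq⟩ := key ε hε
    refine ⟨a, b, ha, hb, e, he, ?_, ?_⟩
    · have := congrArg Complex.re heq
      simpa using this
    · have := congrArg Complex.im heq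
      simpa using this
  set D : ℝ := μ.re * ν.im - μ.im * ν.re with hDdef
  rcases eq_or_ne D 0 with hD | hD
  · -- degenerate case : ν = ± μ
    have hD0 : μ.re * ν.im - μ.im * ν.re = 0 := hD
    set c : ℝ := μ.re * ν.re + μ.im * ν.im with hcdef
    have hc2 : c * c = 1 := by
      have hcd : c * c + D * D =
          (μ.re * μ.re + μ.im * μ.im) * (ν.re * ν.re + ν.im * ν.im) := by
        rw [hcdef, hDdef]; ring
      rw [hmsq, hnsq, hD] at hcd
      nlinarith [hcd]
    have hn1 : ν.re = c * μ.re := by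
      linear_combination (-μ.re) * hcdef + (-ν.re) * hmsq + (-μ.im) * hD0
    have hn2 : ν.im = c * μ.im := by
      linear_combination (-μ.im) * hcdef + (-ν.im) * hmsq + μ.re * hD0
    set t : ℝ := lam.re * μ.re + lam.im * μ.im with htdef
    -- the cross term vanishes
    have hI : lam.im * μ.re - lam.re * μ.im = 0 := by
      apply real_eq_zero_of_forall
      intro ε hε
      obtain ⟨a, b, ha, hb, e, he, h1, h2⟩ := key2 (ε/2) (by linarith)
      have hid : lam.im * μ.re - lam.re * μ.im = e.re * μ.im - e.im * μ.re := by
        linear_combination μ.re * h2 - μ.im * h1 + b * hD0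
      rw [hid]
      have h1' : |e.re| ≤ ε/2 := le_of_lt (lt_of_le_of_lt (Complex.abs_re_le_norm e) he)
      have h2' : |e.im| ≤ ε/2 := le_of_lt (lt_of_le_of_lt (Complex.abs_im_le_norm e) he)
      have := combo_bound h1' h2' hmim hmre
      linarith
    have hlam1 : lam.re = t * μ.re := by
      linear_combination (-μ.re) * htdef + (-lam.re) * hmsq + (-μ.im) * hI
    have hlam2 : lam.im = t * μ.im := by
      linear_combination (-μ.im) * htdef + (-lam.im) * hmsq + μ.re * hI
    rcases mul_self_eq_one_iff.mp hc2 with hc | hc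
    · -- ν = μ : need t ≥ 0
      have ht : 0 ≤ t := by
        apply real_nonneg_of_forall
        intro ε hε
        obtain ⟨a, b, ha, hb, e, he, h1, h2⟩ := key2 (ε/2) (by linarith)
        have habt : a + b * c = t + (e.re * μ.re + e.im * μ.im) := by
          linear_combination (-μ.re) * h1 + (-μ.im) * h2 + (-a) * hmsq + b * hcdef - htdef
        have h1' : |e.re| ≤ ε/2 := le_of_lt (lt_of_le_of_lt (Complex.abs_re_le_norm e) he)
        have h2' : |e.im| ≤ ε/2 := le_of_lt (lt_of_le_of_lt (Complex.abs_im_le_norm e) he)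
        have hbd : |e.re * μ.re - (-e.im) * μ.im| ≤ 2 * (ε/2) := by
          have h2'' : |(-e.im)| ≤ ε/2 := by rwa [abs_neg]
          exact combo_bound h1' h2'' hmre hmim
        have h3 : e.re * μ.re - (-e.im) * μ.im = e.re * μ.re + e.im * μ.im := by ring
        rw [h3] at hbd
        have hs2 : e.re * μ.re + e.im * μ.im ≤ ε := by
          have := le_abs_self (e.re * μ.re + e.im * μ.im)
          linarith
        have hcb : 0 ≤ b * c := by rw [hc]; simpa using hb
        linarith
      refine ⟨t, 0, ht, le_refl 0, ?_⟩
      apply Complex.ext <;> simp [hlam1, hlam2]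
    · -- ν = -μ
      rcases le_or_gt 0 t with ht | ht
      · refine ⟨t, 0, ht, le_refl 0, ?_⟩
        apply Complex.ext <;> simp [hlam1, hlam2]
      · refine ⟨0, -t, le_refl 0, by linarith, ?_⟩
        have hn1' : ν.re = -μ.re := by rw [hn1, hc]; ring
        have hn2' : ν.im = -μ.im := by rw [hn2, hc]; ring
        apply Complex.ext <;> simp [hlam1, hlam2, hn1', hn2'] <;> ring
  · -- generic case : μ, ν linearly independent over ℝ
    have hDpos : 0 < |D| := abs_pos.mpr hD
    set a0 : ℝ := (lam.re * ν.im - lam.im * ν.re) / D with ha0def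
    set b0 : ℝ := (lam.im * μ.re - lam.re * μ.im) / D with hb0def
    have ha0D : a0 * D = lam.re * ν.im - lam.im * ν.re := by
      rw [ha0def]; exact div_mul_cancel₀ _ hD
    have hb0D : b0 * D = lam.im * μ.re - lam.re * μ.im := by
      rw [hb0def]; exact div_mul_cancel₀ _ hD
    -- approximation facts
    have approx : ∀ δ : ℝ, 0 < δ → ∃ a b : ℝ, 0 ≤ a ∧ 0 ≤ b ∧
        |a - a0| * |D| ≤ 2*δ ∧ |b - b0| * |D| ≤ 2*δ ∧ ∃ e : ℂ, ‖e‖ < δ ∧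
        lam.re + e.re = a * μ.re + b * ν.re ∧ lam.im + e.im = a * μ.im + b * ν.im := by
      intro δ hδ
      obtain ⟨a, b, ha, hb, e, he, h1, h2⟩ := key2 δ hδ
      have h1' : |e.re| ≤ δ := le_of_lt (lt_of_le_of_lt (Complex.abs_re_le_norm e) he)
      have h2' : |e.im| ≤ δ := le_of_lt (lt_of_le_of_lt (Complex.abs_im_le_norm e) he)
      refine ⟨a, b, ha, hb, ?_, ?_, e, he, h1, h2⟩
      · have haD : a * D = (lam.re + e.re) * ν.im - (lam.im + e.im) * ν.re := by
          linear_combination (-ν.im) * h1 + ν.re * h2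
        have hkey : (a - a0) * D = e.re * ν.im - e.im * ν.re := by
          linear_combination haD - ha0D
        calc |a - a0| * |D| = |(a - a0) * D| := (abs_mul _ _).symm
          _ = |e.re * ν.im - e.im * ν.re| := by rw [hkey]
          _ ≤ 2*δ := combo_bound h1' h2' hnim hnre
      · have hbD : b * D = (lam.im + e.im) * μ.re - (lam.re + e.re) * μ.im := by
          linear_combination μ.im * h1 + (-μ.re) * h2
        have hkey : (b - b0) * D = e.im * μ.re - e.re * μ.im := by
          linear_combination hbD - hb0D
        calc |b - b0| * |D| = |(b - b0) * D| := (abs_mul _ _).symm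
          _ = |e.im * μ.re - e.re * μ.im| := by rw [hkey]
          _ ≤ 2*δ := combo_bound h2' h1' hmre hmim
    have ha0 : 0 ≤ a0 := by
      apply real_nonneg_of_forall
      intro ε hε
      obtain ⟨a, b, ha, hb, haa, hbb, e, he, h1, h2⟩ :=
        approx (ε * |D| / 2) (by exact div_pos (mul_pos hε hDpos) two_pos)
      have h3 : |a - a0| ≤ ε := by
        have h4 : |a - a0| * |D| ≤ ε * |D| := by linarith
        exact le_of_mul_le_mul_right h4 hDpos
      have := le_abs_self (a - a0)
      linarith
    have hb0 : 0 ≤ b0 := by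
      apply real_nonneg_of_forall
      intro ε hε
      obtain ⟨a, b, ha, hb, haa, hbb, e, he, h1, h2⟩ :=
        approx (ε * |D| / 2) (by exact div_pos (mul_pos hε hDpos) two_pos)
      have h3 : |b - b0| ≤ ε := by
        have h4 : |b - b0| * |D| ≤ ε * |D| := by linarith
        exact le_of_mul_le_mul_right h4 hDpos
      have := le_abs_self (b - b0)
      linarith
    refine ⟨a0, b0, ha0, hb0, ?_⟩
    have hre : lam.re - (a0 * μ.re + b0 * ν.re) = 0 := by
      apply real_eq_zero_of_forall
      intro ε hε
      obtain ⟨δ, hδpos, hfin⟩ : ∃ δ : ℝ, 0 < δ ∧ δ * (|D| + 4) = ε * |D| :=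
        ⟨ε * |D| / (|D| + 4), div_pos (mul_pos hε hDpos) (by linarith),
          div_mul_cancel₀ _ (by positivity)⟩
      obtain ⟨a, b, ha, hb, haa, hbb, e, he, h1, h2⟩ := approx δ hδpos
      have h1' : |e.re| ≤ δ := le_of_lt (lt_of_le_of_lt (Complex.abs_re_le_norm e) he)
      have hid : lam.re - (a0 * μ.re + b0 * ν.re) =
          -e.re + (a - a0) * μ.re + (b - b0) * ν.re := by linear_combination h1
      rw [hid]
      have t1 : |(a - a0) * μ.re| * |D| ≤ 2*δ := by
        rw [abs_mul]
        have hq : |a - a0| * |μ.re| * |D| = (|a - a0| * |D|) * |μ.re| := by ring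
        rw [hq]
        have := mul_le_mul haa hmre (abs_nonneg _) (by linarith : (0:ℝ) ≤ 2*δ)
        linarith
      have t2 : |(b - b0) * ν.re| * |D| ≤ 2*δ := by
        rw [abs_mul]
        have hq : |b - b0| * |ν.re| * |D| = (|b - b0| * |D|) * |ν.re| := by ring
        rw [hq]
        have := mul_le_mul hbb hnre (abs_nonneg _) (by linarith : (0:ℝ) ≤ 2*δ)
        linarith
      have ttri : |-e.re + (a - a0) * μ.re + (b - b0) * ν.re| ≤
          |e.re| + |(a - a0) * μ.re| + |(b - b0) * ν.re| := by
        have u1 := abs_add_le (-e.re + (a - a0) * μ.re) ((b - b0) * ν.re)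
        have u2 := abs_add_le (-e.re) ((a - a0) * μ.re)
        have u3 : |(-e.re)| = |e.re| := abs_neg _
        linarith
      have he' : |e.re| * |D| ≤ δ * |D| := mul_le_mul_of_nonneg_right h1' (abs_nonneg D)
      have hprod := mul_le_mul_of_nonneg_right ttri (abs_nonneg D)
      have hkey : |-e.re + (a - a0) * μ.re + (b - b0) * ν.re| * |D| ≤ ε * |D| := by
        linarith [hprod, he', t1, t2, hfin]
      exact le_of_mul_le_mul_right hkey hDpos
    have him : lam.im - (a0 * μ.im + b0 * ν.im) = 0 := by
      apply real_eq_zero_of_forall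
      intro ε hε
      obtain ⟨δ, hδpos, hfin⟩ : ∃ δ : ℝ, 0 < δ ∧ δ * (|D| + 4) = ε * |D| :=
        ⟨ε * |D| / (|D| + 4), div_pos (mul_pos hε hDpos) (by linarith),
          div_mul_cancel₀ _ (by positivity)⟩
      obtain ⟨a, b, ha, hb, haa, hbb, e, he, h1, h2⟩ := approx δ hδpos
      have h1' : |e.im| ≤ δ := le_of_lt (lt_of_le_of_lt (Complex.abs_im_le_norm e) he)
      have hid : lam.im - (a0 * μ.im + b0 * ν.im) =
          -e.im + (a - a0) * μ.im + (b - b0) * ν.im := by linear_combination h2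
      rw [hid]
      have t1 : |(a - a0) * μ.im| * |D| ≤ 2*δ := by
        rw [abs_mul]
        have hq : |a - a0| * |μ.im| * |D| = (|a - a0| * |D|) * |μ.im| := by ring
        rw [hq]
        have := mul_le_mul haa hmim (abs_nonneg _) (by linarith : (0:ℝ) ≤ 2*δ)
        linarith
      have t2 : |(b - b0) * ν.im| * |D| ≤ 2*δ := by
        rw [abs_mul]
        have hq : |b - b0| * |ν.im| * |D| = (|b - b0| * |D|) * |ν.im| := by ring
        rw [hq]
        have := mul_le_mul hbb hnim (abs_nonneg _) (by linarith : (0:ℝ) ≤ 2*δ)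
        linarith
      have ttri : |-e.im + (a - a0) * μ.im + (b - b0) * ν.im| ≤
          |e.im| + |(a - a0) * μ.im| + |(b - b0) * ν.im| := by
        have u1 := abs_add_le (-e.im + (a - a0) * μ.im) ((b - b0) * ν.im)
        have u2 := abs_add_le (-e.im) ((a - a0) * μ.im)
        have u3 : |(-e.im)| = |e.im| := abs_neg _
        linarith
      have he' : |e.im| * |D| ≤ δ * |D| := mul_le_mul_of_nonneg_right h1' (abs_nonneg D)
      have hprod := mul_le_mul_of_nonneg_right ttri (abs_nonneg D)
      have hkey : |-e.im + (a - a0) * μ.im + (b - b0) * ν.im| * |D| ≤ ε * |D| := by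
        linarith [hprod, he', t1, t2, hfin]
      exact le_of_mul_le_mul_right hkey hDpos
    apply Complex.ext
    · simp only [Complex.add_re, Complex.mul_re, Complex.ofReal_re, Complex.ofReal_im,
        zero_mul, sub_zero]
      linarith [hre]
    · simp only [Complex.add_im, Complex.mul_im, Complex.ofReal_re, Complex.ofReal_im,
        zero_mul, add_zero]
      linarith [him]
end

section
/- Let λ and σ be complex numbers with |λ| = 1 and |σ| < 1. Then there exist complex numbers x and z such that \bar{x} z + \bar{z} σ x = λ. -/
theorem exists_xz_solution (lam σ : ℂ) (hlam : ‖lam‖ = 1) (hσ : ‖σ‖ < 1) :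
    ∃ x z : ℂ, (starRingEnd ℂ) x * z + (starRingEnd ℂ) z * σ * x = lam := by
  have hd : (1 : ℂ) - σ * (starRingEnd ℂ) σ ≠ 0 := by
    have h1 : Complex.normSq σ < 1 := by
      rw [← Complex.sq_norm]
      nlinarith [norm_nonneg σ]
    rw [Complex.mul_conj]
    intro h
    have : (Complex.normSq σ : ℂ) = 1 := by linear_combination -h
    norm_cast at this
    linarith
  refine ⟨1, (lam - σ * (starRingEnd ℂ) lam) / (1 - σ * (starRingEnd ℂ) σ), ?_⟩
  have hd2 : (1 : ℂ) - (starRingEnd ℂ) σ * σ ≠ 0 := by rwa [mul_comm]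
  simp only [map_div₀, map_sub, map_mul, map_one, Complex.conj_conj]
  field_simp
  ring
end

section
/- Let λ and σ be complex numbers with |λ| = 1 and |σ| < 1. Then for every ε > 0 there exists a 2×2 complex matrix E with all entries of modulus less than ε such that diag(λ,0) + E is *congruent to the matrix [[0,1],[σ,0]]. -/
open Matrix

theorem arrow_diag_lambda0_to_sigma_block (lam σ : ℂ)
    (hlam : ‖lam‖ = 1) (hσ : ‖σ‖ < 1) :
    ∀ ε : ℝ, 0 < ε → ∃ E : Matrix (Fin 2) (Fin 2) ℂ,
      (∀ i j, ‖E i j‖ < ε) ∧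
      ∃ S : Matrix (Fin 2) (Fin 2) ℂ, S.det ≠ 0 ∧
        Sᴴ * (!![lam, 0; 0, 0] + E) * S = !![0, 1; σ, 0] := by
  intro ε hε
  set d : ℝ := ε / 2 with hd_def
  have hd : (d : ℂ) ≠ 0 := by
    simp [hd_def]
    positivity
  have hq : (1 - σ * (starRingEnd ℂ) σ) ≠ 0 := by
    rw [Complex.mul_conj]
    intro h
    have : (Complex.normSq σ : ℂ) = 1 := by linear_combination -h
    have h2 : Complex.normSq σ = 1 := by exact_mod_cast this
    have h3 : Complex.normSq σ < 1 := by
      have := Complex.sq_norm σ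
      nlinarith [norm_nonneg σ]
    linarith
  obtain ⟨μ, hkey⟩ : ∃ μ : ℂ, μ + σ * (starRingEnd ℂ) μ = lam := by
    refine ⟨(lam - σ * (starRingEnd ℂ) lam) / (1 - σ * (starRingEnd ℂ) σ), ?_⟩
    rw [map_div₀]
    simp only [map_sub, _root_.map_mul, _root_.map_one, Complex.conj_conj]
    have hq' : (1 - (starRingEnd ℂ) σ * σ) ≠ 0 := by
      intro h; apply hq; linear_combination h
    field_simp
    ring
  refine ⟨!![0, (d : ℂ); σ * d, 0], ?_, !![1, 0; -μ / d, 1 / d], ?_, ?_⟩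
  · intro i j
    have hσ0 : 0 ≤ ‖σ‖ := norm_nonneg σ
    fin_cases i <;> fin_cases j <;>
      simp [hd_def, _root_.map_mul, abs_of_pos, hε] <;>
      nlinarith
  · rw [Matrix.det_fin_two_of]
    simpa using hd
  · ext i j
    fin_cases i <;> fin_cases j <;>
      simp [Matrix.mul_apply, Fin.sum_univ_two, Matrix.conjTranspose_apply, map_div₀,
        Complex.conj_conj, Complex.conj_ofReal] <;>
      field_simp <;>
      linear_combination -hkey
end

section
/- Let λ, τ be unimodular complex numbers. If for every ε > 0 there is a 2×2 matrix E with entries of modulus less than ε such that diag(λ,0) + E is *congruent to τ·[[0,1],[1,i]], then Im(λ \bar{τ}) ≥ 0. -/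
open Matrix

theorem arrow_diag_lambda0_to_tau_block_necessary (lam τ : ℂ)
    (hlam : ‖lam‖ = 1) (hτ : ‖τ‖ = 1)
    (h : ∀ ε : ℝ, 0 < ε → ∃ E : Matrix (Fin 2) (Fin 2) ℂ,
      (∀ i j, ‖E i j‖ < ε) ∧
      ∃ S : Matrix (Fin 2) (Fin 2) ℂ, S.det ≠ 0 ∧
        Sᴴ * (!![lam, 0; 0, 0] + E) * S = τ • !![0, 1; 1, Complex.I]) :
    0 ≤ (lam * (starRingEnd ℂ) τ).im := by
  by_contra hneg
  push_neg at hneg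
  set c := (lam * (starRingEnd ℂ) τ).im with hc
  obtain ⟨E, hE, S, hdet, hcong⟩ := h (-c/2) (by linarith)
  have hSd : IsUnit S.det := isUnit_iff_ne_zero.mpr hdet
  have hSHd : IsUnit Sᴴ.det := by
    rw [Matrix.det_conjTranspose]
    exact isUnit_iff_ne_zero.mpr (star_ne_zero.mpr hdet)
  have h1 : S * S⁻¹ = 1 := Matrix.mul_nonsing_inv S hSd
  have h2 : Sᴴ⁻¹ * Sᴴ = 1 := Matrix.nonsing_inv_mul Sᴴ hSHd
  have hA : Sᴴ⁻¹ * (τ • !![0, 1; 1, Complex.I]) * S⁻¹ = !![lam, 0; 0, 0] + E := by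
    rw [← hcong]
    calc Sᴴ⁻¹ * (Sᴴ * (!![lam, 0; 0, 0] + E) * S) * S⁻¹
        = (Sᴴ⁻¹ * Sᴴ) * (!![lam, 0; 0, 0] + E) * (S * S⁻¹) := by
          simp only [Matrix.mul_assoc]
      _ = !![lam, 0; 0, 0] + E := by rw [h1, h2, Matrix.one_mul, Matrix.mul_one]
  rw [← Matrix.conjTranspose_nonsing_inv] at hA
  set T := S⁻¹ with hT
  set a := T 0 0 with ha
  set b := T 1 0 with hb
  have key := congrArg (fun M => M 0 0) hA
  simp [Matrix.mul_apply, Fin.sum_univ_two, Matrix.conjTranspose_apply,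
    Matrix.smul_apply, smul_eq_mul, Matrix.add_apply] at key
  have hττ : (starRingEnd ℂ) τ * τ = 1 := by
    rw [mul_comm, Complex.mul_conj, Complex.normSq_eq_norm_sq, hτ]
    norm_num
  have hmul : (lam + E 0 0) * (starRingEnd ℂ) τ
      = (starRingEnd ℂ) (T 1 0) * T 0 0 + (starRingEnd ℂ) (T 0 0) * T 1 0
        + Complex.I * ((starRingEnd ℂ) (T 1 0) * T 1 0) := by
    rw [← key]
    linear_combination ((starRingEnd ℂ) (T 1 0) * T 0 0 + (starRingEnd ℂ) (T 0 0) * T 1 0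
      + Complex.I * ((starRingEnd ℂ) (T 1 0) * T 1 0)) * hττ
  have him : ((lam + E 0 0) * (starRingEnd ℂ) τ).im = Complex.normSq (T 1 0) := by
    rw [hmul]
    simp [Complex.add_im, Complex.mul_im, Complex.mul_re, Complex.normSq_apply,
      Complex.I_re, Complex.I_im]
    ring
  have h4 : (E 0 0 * (starRingEnd ℂ) τ).im ≤ ‖E 0 0‖ := by
    calc (E 0 0 * (starRingEnd ℂ) τ).im ≤ |(E 0 0 * (starRingEnd ℂ) τ).im| := le_abs_self _
      _ ≤ ‖E 0 0 * (starRingEnd ℂ) τ‖ := Complex.abs_im_le_norm _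
      _ = ‖E 0 0‖ * ‖(starRingEnd ℂ) τ‖ := norm_mul _ _
      _ = ‖E 0 0‖ := by rw [Complex.norm_conj, hτ, mul_one]
  have h5 : ‖E 0 0‖ < -c/2 := hE 0 0
  have h6 : c + (E 0 0 * (starRingEnd ℂ) τ).im = Complex.normSq (T 1 0) := by
    rw [← him, add_mul, Complex.add_im]
  linarith [Complex.normSq_nonneg (T 1 0)]
end

section
/- Let λ, τ be unimodular complex numbers with Im(λ \bar{τ}) ≥ 0. Then for every ε > 0 there exists a 2×2 matrix E with all entries of modulus less than ε such that diag(λ,0) + E is *congruent to τ·[[0,1],[1,i]]. -/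
open Matrix

theorem arrow_diag_lambda0_to_tau_block_sufficient (lam τ : ℂ)
    (hlam : ‖lam‖ = 1) (hτ : ‖τ‖ = 1)
    (him : 0 ≤ (lam * (starRingEnd ℂ) τ).im) :
    ∀ ε : ℝ, 0 < ε → ∃ E : Matrix (Fin 2) (Fin 2) ℂ,
      (∀ i j, ‖E i j‖ < ε) ∧
      ∃ S : Matrix (Fin 2) (Fin 2) ℂ, S.det ≠ 0 ∧
        Sᴴ * (!![lam, 0; 0, 0] + E) * S = τ • !![0, 1; 1, Complex.I] := by
  intro ε hε
  set μ : ℂ := lam * (starRingEnd ℂ) τ with hμ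
  have hττ : τ * (starRingEnd ℂ) τ = 1 := by
    rw [Complex.mul_conj]
    norm_cast
    rw [Complex.normSq_eq_norm_sq, hτ]; norm_num
  have hlamμ : τ * μ = lam := by
    rw [hμ]; rw [show τ * (lam * (starRingEnd ℂ) τ) = lam * (τ * (starRingEnd ℂ) τ) by ring,
      hττ, mul_one]
  -- small parameters
  set s : ℝ := min ε 1 / 2 with hs_def
  have hs : 0 < s := by positivity
  have hsε : s < ε := by
    have : min ε 1 ≤ ε := min_le_left _ _
    simp only [hs_def]; linarith
  set b : ℝ := Real.sqrt (μ.im + s) with hb_def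
  have hbpos : 0 < b := Real.sqrt_pos.mpr (by linarith)
  have hb2 : b ^ 2 = μ.im + s := Real.sq_sqrt (by linarith)
  set a1 : ℝ := μ.re / (2 * b) with ha1_def
  set a : ℂ := (a1 : ℂ) + Complex.I with ha_def
  have ha1b : 2 * a1 * b = μ.re := by
    rw [ha1_def]; field_simp
  -- key algebraic identity for the (0,0) entry
  have key : (starRingEnd ℂ) a * (b : ℂ) + (b : ℂ) * a + Complex.I * (b : ℂ) ^ 2
      = μ + Complex.I * (s : ℂ) := by
    have hca : (starRingEnd ℂ) a = (a1 : ℂ) - Complex.I := by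
      simp [ha_def, Complex.conj_I, sub_eq_add_neg]
    rw [hca, ha_def]
    have hμeq : μ = (μ.re : ℂ) + (μ.im : ℂ) * Complex.I := (Complex.re_add_im μ).symm
    rw [hμeq]
    have h1 : ((b : ℂ)) ^ 2 = ((μ.im : ℂ) + (s : ℂ)) := by
      norm_cast
    rw [h1]
    have h2 : ((a1 : ℂ) - Complex.I) * b + b * ((a1 : ℂ) + Complex.I)
        = (2 * a1 * b : ℝ) := by push_cast; ring
    rw [h2, ha1b]
    ring
  set K : ℝ := |a1| + b + 1 with hK_def
  have hK : 0 < K := by positivity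
  set c : ℝ := min 1 (ε / (2 * (K + 1))) with hc_def
  have hcpos : 0 < c := by
    apply lt_min one_pos; positivity
  have hc1 : c ≤ 1 := min_le_left _ _
  have hcle : c ≤ ε / (2 * (K + 1)) := min_le_right _ _
  have hcK : c * K < ε := by
    have h2 : c * K ≤ ε / (2 * (K + 1)) * K := by
      apply mul_le_mul_of_nonneg_right hcle hK.le
    have h3 : ε / (2 * (K + 1)) * K < ε := by
      rw [div_mul_eq_mul_div, div_lt_iff₀ (by positivity)]
      nlinarith
    exact lt_of_le_of_lt h2 h3
  have hchalf : c ≤ ε / 2 := by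
    refine hcle.trans ?_
    rw [div_le_div_iff₀ (by positivity) (by norm_num : (0:ℝ) < 2)]
    nlinarith
  have hc2 : c ^ 2 < ε := by nlinarith
  -- the matrices
  set T : Matrix (Fin 2) (Fin 2) ℂ := !![a, 0; (b : ℂ), (c : ℂ)] with hT_def
  set M : Matrix (Fin 2) (Fin 2) ℂ := τ • !![0, 1; 1, Complex.I] with hM_def
  set E : Matrix (Fin 2) (Fin 2) ℂ :=
    !![τ * Complex.I * (s : ℂ), τ * (c : ℂ) * ((starRingEnd ℂ) a + Complex.I * (b : ℂ));
       τ * (c : ℂ) * (a + Complex.I * (b : ℂ)), τ * Complex.I * (c : ℂ) ^ 2] with hE_def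
  have habs_τ_mul : ∀ z : ℂ, ‖τ * z‖ = ‖z‖ := by
    intro z; rw [norm_mul, hτ, one_mul]
  have hboundca : ‖(starRingEnd ℂ) a + Complex.I * (b : ℂ)‖ ≤ K := by
    have hca : (starRingEnd ℂ) a = (a1 : ℂ) - Complex.I := by
      simp [ha_def, Complex.conj_I, sub_eq_add_neg]
    rw [hca]
    calc ‖(a1 : ℂ) - Complex.I + Complex.I * (b : ℂ)‖
        ≤ ‖(a1 : ℂ)‖ + ‖-Complex.I + Complex.I * (b : ℂ)‖ := by
          rw [show (a1 : ℂ) - Complex.I + Complex.I * (b : ℂ)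
            = (a1 : ℂ) + (-Complex.I + Complex.I * (b : ℂ)) by ring]
          exact norm_add_le _ _
      _ ≤ |a1| + (1 + b) := by
          rw [Complex.norm_real, Real.norm_eq_abs]
          gcongr
          calc ‖-Complex.I + Complex.I * (b : ℂ)‖
              ≤ ‖-Complex.I‖ + ‖Complex.I * (b : ℂ)‖ :=
                norm_add_le _ _
            _ = 1 + b := by
                simp [Complex.norm_real, abs_of_pos hbpos]
      _ = K := by rw [hK_def]; ring
  have hbounda : ‖a + Complex.I * (b : ℂ)‖ ≤ K := by
    rw [ha_def]
    calc ‖(a1 : ℂ) + Complex.I + Complex.I * (b : ℂ)‖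
        ≤ ‖(a1 : ℂ)‖ + ‖Complex.I + Complex.I * (b : ℂ)‖ := by
          rw [show (a1 : ℂ) + Complex.I + Complex.I * (b : ℂ)
            = (a1 : ℂ) + (Complex.I + Complex.I * (b : ℂ)) by ring]
          exact norm_add_le _ _
      _ ≤ |a1| + (1 + b) := by
          rw [Complex.norm_real, Real.norm_eq_abs]
          gcongr
          calc ‖Complex.I + Complex.I * (b : ℂ)‖
              ≤ ‖Complex.I‖ + ‖Complex.I * (b : ℂ)‖ :=
                norm_add_le _ _
            _ = 1 + b := by simp [Complex.norm_real, abs_of_pos hbpos]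
      _ = K := by rw [hK_def]; ring
  refine ⟨E, ?_, ?_⟩
  · intro i j
    fin_cases i <;> fin_cases j <;>
      simp only [hE_def, Matrix.cons_val', Matrix.cons_val_zero, Matrix.cons_val_one,
        Matrix.head_cons, Matrix.empty_val', Matrix.cons_val_fin_one, Matrix.head_fin_const,
        Fin.mk_zero, Fin.mk_one, Matrix.of_apply, Fin.isValue]
    · rw [mul_assoc, habs_τ_mul, norm_mul, Complex.norm_I, one_mul, Complex.norm_real, Real.norm_eq_abs,
        abs_of_pos hs]
      exact hsε
    · rw [mul_assoc, habs_τ_mul, norm_mul, Complex.norm_real, Real.norm_eq_abs, abs_of_pos hcpos]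
      calc c * ‖(starRingEnd ℂ) a + Complex.I * (b : ℂ)‖ ≤ c * K := by
            gcongr
        _ < ε := hcK
    · rw [mul_assoc, habs_τ_mul, norm_mul, Complex.norm_real, Real.norm_eq_abs, abs_of_pos hcpos]
      calc c * ‖a + Complex.I * (b : ℂ)‖ ≤ c * K := by gcongr
        _ < ε := hcK
    · rw [mul_assoc, habs_τ_mul, norm_mul, Complex.norm_I, one_mul, norm_pow,
        Complex.norm_real, Real.norm_eq_abs, abs_of_pos hcpos]
      exact hc2
  · -- congruence part
    have hdetT : T.det = a * (c : ℂ) := by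
      rw [hT_def, Matrix.det_fin_two_of]; ring
    have ha0 : a ≠ 0 := by
      intro h
      have : a.im = 1 := by simp [ha_def]
      rw [h] at this; simp at this
    have hc0 : (c : ℂ) ≠ 0 := by
      exact_mod_cast hcpos.ne'
    have hdT : T.det ≠ 0 := by rw [hdetT]; exact mul_ne_zero ha0 hc0
    have hmain : !![lam, 0; 0, 0] + E = Tᴴ * M * T := by
      ext i j
      fin_cases i <;> fin_cases j <;>
        simp only [hT_def, hM_def, hE_def, Matrix.add_apply, Matrix.mul_apply,
          Fin.sum_univ_two, Matrix.conjTranspose_apply, Matrix.smul_apply,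
          Matrix.cons_val', Matrix.cons_val_zero, Matrix.cons_val_one,
          Matrix.head_cons, Matrix.empty_val', Matrix.cons_val_fin_one,
          Matrix.head_fin_const, map_zero, Complex.conj_ofReal, smul_eq_mul,
          Fin.mk_zero, Fin.mk_one, Matrix.of_apply, Fin.isValue,
          Complex.star_def, star_zero, map_add, Complex.conj_I]
      · -- (0,0) entry
        have : lam + τ * Complex.I * (s : ℂ) = τ * ((starRingEnd ℂ) a * (b : ℂ)
            + (b : ℂ) * a + Complex.I * (b : ℂ) ^ 2) := by
          rw [key, mul_add, hlamμ]; ring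
        rw [this]; ring
      · ring
      · ring
      · ring
    set S : Matrix (Fin 2) (Fin 2) ℂ := T⁻¹ with hS_def
    have hdS : S.det ≠ 0 := by
      rw [hS_def, Matrix.det_nonsing_inv, Ring.inverse_eq_inv]
      exact inv_ne_zero hdT
    refine ⟨S, hdS, ?_⟩
    rw [hmain, hS_def, Matrix.conjTranspose_nonsing_inv]
    have h1 : T * T⁻¹ = 1 := Matrix.mul_nonsing_inv T (isUnit_iff_ne_zero.mpr hdT)
    have h2 : (Tᴴ)⁻¹ * Tᴴ = 1 := Matrix.nonsing_inv_mul Tᴴ (isUnit_iff_ne_zero.mpr (by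
      rw [Matrix.det_conjTranspose]; exact star_ne_zero.mpr hdT))
    calc (Tᴴ)⁻¹ * (Tᴴ * M * T) * T⁻¹ = ((Tᴴ)⁻¹ * Tᴴ) * M * (T * T⁻¹) := by
          simp only [Matrix.mul_assoc]
      _ = M := by rw [h1, h2, Matrix.one_mul, Matrix.mul_one]
end

section
/- Let λ, τ be unimodular complex numbers. If for every ε > 0 there exists a 2×2 matrix E with entries of modulus less than ε such that diag(λ,−λ) + E is *congruent to τ·[[0,1],[1,i]], then λ = τ or λ = −τ. -/
open Matrix

theorem arrow_diag_lambda_neg_lambda_to_tau_block_necessary (lam τ : ℂ)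
    (hlam : ‖lam‖ = 1) (hτ : ‖τ‖ = 1)
    (h : ∀ ε : ℝ, 0 < ε → ∃ E : Matrix (Fin 2) (Fin 2) ℂ,
      (∀ i j, ‖E i j‖ < ε) ∧
      ∃ S : Matrix (Fin 2) (Fin 2) ℂ, S.det ≠ 0 ∧
        Sᴴ * (!![lam, 0; 0, -lam] + E) * S = τ • !![0, 1; 1, Complex.I]) :
    lam = τ ∨ lam = -τ := by
  -- Main estimate: τ² = λ²
  have key : ∀ δ : ℝ, 0 < δ → ‖τ^2 - lam^2‖ < δ := by
    intro δ hδ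
    set ε : ℝ := min (1/8) (δ/17) with hεdef
    have hε : 0 < ε := lt_min (by norm_num) (by positivity)
    have hε8 : ε ≤ 1/8 := min_le_left _ _
    have hεδ : ε ≤ δ/17 := min_le_right _ _
    obtain ⟨E, hE, S, hS, heq⟩ := h ε hε
    set d : ℂ := (!![lam, 0; 0, -lam] + E).det with hddef
    -- determinant of both sides
    have hdet := congrArg Matrix.det heq
    simp only [Matrix.det_mul, Matrix.det_conjTranspose, Matrix.det_smul,
      Fintype.card_fin, Matrix.det_fin_two_of] at hdet
    -- hdet : star S.det * d * S.det = τ^2 * (0 * Complex.I - 1 * 1)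
    set c : ℝ := Complex.normSq S.det with hcdef
    have hcpos : 0 < c := Complex.normSq_pos.mpr hS
    have heqc : (c : ℂ) * d = -τ^2 := by
      have hsc : (c : ℂ) = star S.det * S.det := by
        rw [hcdef]; rw [Complex.star_def, Complex.normSq_eq_conj_mul_self]
      rw [hsc]
      linear_combination hdet
    -- expand d
    have hdexp : d + lam^2 = lam * E 1 1 - lam * E 0 0 + (E 0 0 * E 1 1 - E 0 1 * E 1 0) := by
      rw [hddef, Matrix.det_fin_two]
      simp [Matrix.add_apply]
      ring
    have h00 := hE 0 0
    have h01 := hE 0 1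
    have h10 := hE 1 0
    have h11 := hE 1 1
    have habs0 : ∀ i j, 0 ≤ ‖E i j‖ := fun i j => norm_nonneg _
    have hb : ‖d + lam^2‖ ≤ 4 * ε := by
      rw [hdexp]
      have t1 : ‖lam * E 1 1 - lam * E 0 0 + (E 0 0 * E 1 1 - E 0 1 * E 1 0)‖
          ≤ ‖lam * E 1 1‖ + ‖lam * E 0 0‖
            + (‖E 0 0 * E 1 1‖ + ‖E 0 1 * E 1 0‖) := by
        calc ‖lam * E 1 1 - lam * E 0 0 + (E 0 0 * E 1 1 - E 0 1 * E 1 0)‖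
            ≤ ‖lam * E 1 1 - lam * E 0 0‖
              + ‖E 0 0 * E 1 1 - E 0 1 * E 1 0‖ := norm_add_le _ _
          _ ≤ _ := by
              gcongr <;> exact norm_sub_le _ _
      refine t1.trans ?_
      simp only [norm_mul, hlam, one_mul]
      nlinarith [habs0 0 0, habs0 0 1, habs0 1 0, habs0 1 1, hε8]
    -- |d| ≥ 1 - 4ε
    have hlam2 : ‖-lam^2‖ = 1 := by
      simp [norm_pow, hlam]
    have hdlow : 1 - 4*ε ≤ ‖d‖ := by
      have := norm_sub_le d (d + lam^2)
      have h2 : ‖-lam^2‖ ≤ ‖d‖ + ‖d + lam^2‖ := by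
        calc ‖-lam^2‖ = ‖d - (d + lam^2)‖ := by ring_nf
          _ ≤ _ := norm_sub_le _ _
      rw [hlam2] at h2
      linarith
    have hd2 : (1:ℝ)/2 ≤ ‖d‖ := by linarith
    have hdpos : 0 < ‖d‖ := by linarith
    -- c * |d| = 1
    have hcd : c * ‖d‖ = 1 := by
      have := congrArg (‖·‖) heqc
      simpa [norm_mul, Complex.norm_real, Real.norm_eq_abs, abs_of_pos hcpos, norm_pow, hτ] using this
    have hc2 : c ≤ 2 := by
      nlinarith
    have hc1 : |c - 1| ≤ 8 * ε := by
      have h1 : |‖d‖ - 1| ≤ 4*ε := by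
        rw [abs_le]
        constructor
        · linarith
        · have he : d - (-lam^2) = d + lam^2 := by ring
          have := abs_norm_sub_norm_le d (-lam^2)
          rw [he, hlam2] at this
          have := abs_le.mp this
          linarith [this.2]
      have : c - 1 = c * (1 - ‖d‖) := by
        rw [mul_one_sub, hcd]
      rw [this, abs_mul, abs_of_pos hcpos, abs_sub_comm]
      nlinarith [abs_nonneg (‖d‖ - 1)]
    -- final bound
    have hid : τ^2 - lam^2 = -((c:ℂ) * (d + lam^2)) + ((c:ℝ) - 1 : ℝ) * lam^2 := by
      push_cast
      linear_combination heqc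
    have hfin : ‖τ^2 - lam^2‖ ≤ 16 * ε := by
      rw [hid]
      calc ‖-((c:ℂ) * (d + lam^2)) + ((c:ℝ) - 1 : ℝ) * lam^2‖
          ≤ ‖-((c:ℂ) * (d + lam^2))‖ + ‖(((c:ℝ) - 1 : ℝ):ℂ) * lam^2‖ :=
            norm_add_le _ _
        _ = c * ‖d + lam^2‖ + |c - 1| := by
            rw [norm_neg, norm_mul, norm_mul, Complex.norm_real,
              Complex.norm_real, Real.norm_eq_abs, Real.norm_eq_abs, abs_of_pos hcpos, norm_pow, hlam]
            ring
        _ ≤ 2 * (4*ε) + 8*ε := by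
            have := norm_nonneg (d + lam^2)
            nlinarith
        _ = 16 * ε := by ring
    calc ‖τ^2 - lam^2‖ ≤ 16 * ε := hfin
      _ ≤ 16 * (δ/17) := by linarith
      _ < δ := by linarith
  have hsq : τ^2 = lam^2 := by
    by_contra hne
    have h0 : 0 < ‖τ^2 - lam^2‖ := by
      simp [norm_pos_iff, sub_eq_zero, hne]
    exact absurd (key _ h0) (lt_irrefl _)
  have hfac : (lam - τ) * (lam + τ) = 0 := by linear_combination -hsq
  rcases mul_eq_zero.mp hfac with h1 | h1
  · left; exact sub_eq_zero.mp h1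
  · right; exact eq_neg_of_add_eq_zero_left h1
end

section
/- Let λ be unimodular, σ ∈ ℂ with |σ| < 1, and δ ∈ {1,−1}. Then there is an ε > 0 such that no matrix A with ‖A − diag(λ, δλ)‖ < ε is *congruent to [[0,1],[σ,0]]. -/
open Matrix

/-- If `Sᴴ * A * S = B` (2×2 complex matrices), then the congruence-covariant quantities
`trace (adjugate Xᴴ * X)` and `det X` both scale by `det Sᴴ * det S`. -/
lemma congr_tr_det (A S B : Matrix (Fin 2) (Fin 2) ℂ) (hS : Sᴴ * A * S = B) :
    trace (adjugate Bᴴ * B) = Sᴴ.det * S.det * trace (adjugate Aᴴ * A) ∧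
    B.det = Sᴴ.det * S.det * A.det := by
  constructor
  · have hBH : Bᴴ = Sᴴ * Aᴴ * S := by
      rw [← hS]; simp [conjTranspose_mul, Matrix.mul_assoc]
    have e1 : adjugate Bᴴ * B = Sᴴ.det • (adjugate S * (adjugate Aᴴ * (A * S))) := by
      rw [hBH, ← hS, adjugate_mul_distrib, adjugate_mul_distrib]
      calc adjugate S * (adjugate Aᴴ * adjugate Sᴴ) * (Sᴴ * A * S)
          = adjugate S * (adjugate Aᴴ * ((adjugate Sᴴ * Sᴴ) * (A * S))) := by
            simp only [Matrix.mul_assoc]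
        _ = Sᴴ.det • (adjugate S * (adjugate Aᴴ * (A * S))) := by
            rw [adjugate_mul]
            simp [Matrix.smul_mul, Matrix.mul_smul]
    rw [e1, trace_smul]
    have e2 : trace (adjugate S * (adjugate Aᴴ * (A * S)))
        = S.det * trace (adjugate Aᴴ * A) := by
      rw [trace_mul_comm]
      have : adjugate Aᴴ * (A * S) * adjugate S = S.det • (adjugate Aᴴ * A) := by
        calc adjugate Aᴴ * (A * S) * adjugate S
            = adjugate Aᴴ * A * (S * adjugate S) := by simp only [Matrix.mul_assoc]
          _ = S.det • (adjugate Aᴴ * A) := by rw [mul_adjugate]; simp [Matrix.mul_smul]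
      rw [this, trace_smul, smul_eq_mul]
    rw [e2, smul_eq_mul]; ring
  · rw [← hS, det_mul, det_mul]; ring

lemma final_ineq (s ε : ℝ) (hs0 : 0 ≤ s) (hσ : s < 1)
    (hεdef : ε = (1 - s) ^ 2 / 10)
    (hfinal : (s ^ 2 + 1) * (1 - 2 * ε) ≤ s * (2 * (1 + ε) ^ 2 + 2 * ε ^ 2)) : False := by
  have h : 0 < 1 - s := by linarith
  have hε0 : 0 < ε := by rw [hεdef]; exact div_pos (pow_pos h 2) (by norm_num)
  have hε1 : ε ≤ 1 / 10 := by rw [hεdef]; nlinarith [sq_nonneg s]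
  have hss : (1 + s) ^ 2 ≤ 4 := by nlinarith
  have f1 : ε * (1 + s) ^ 2 ≤ ε * 4 := mul_le_mul_of_nonneg_left hss hε0.le
  have f2 : s * ε ^ 2 ≤ ε / 10 := by nlinarith [sq_nonneg ε]
  have h10ε : 10 * ε = s ^ 2 - 2 * s + 1 := by rw [hεdef]; ring
  nlinarith [hfinal, f1, f2, h10ε, hε0]

theorem no_arrow_diag_to_sigma_block (lam σ : ℂ) (δ : ℂ)
    (hlam : ‖lam‖ = 1) (hσ : ‖σ‖ < 1) (hδ : δ = 1 ∨ δ = -1) :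
    ∃ ε : ℝ, 0 < ε ∧ ∀ A : Matrix (Fin 2) (Fin 2) ℂ,
      (∀ i j, ‖(A - !![lam, 0; 0, δ * lam]) i j‖ < ε) →
      ¬ ∃ S : Matrix (Fin 2) (Fin 2) ℂ, S.det ≠ 0 ∧ Sᴴ * A * S = !![0, 1; σ, 0] := by
  have hs0 : 0 ≤ ‖σ‖ := norm_nonneg σ
  have h1s : 0 < 1 - ‖σ‖ := by linarith
  refine ⟨(1 - ‖σ‖)^2 / 10, by positivity, ?_⟩
  rintro A hA ⟨S, -, hS⟩
  set s := ‖σ‖ with hsdef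
  set ε := (1 - s)^2 / 10 with hεdef
  clear_value s ε
  have hε0 : 0 < ε := by rw [hεdef]; positivity
  have hε1 : ε ≤ 1/10 := by
    rw [hεdef]; nlinarith [sq_nonneg s]
  -- entrywise bounds on A
  have h00 := hA 0 0
  have h01 := hA 0 1
  have h10 := hA 1 0
  have h11 := hA 1 1
  simp only [Matrix.sub_apply, Matrix.cons_val', Matrix.cons_val_zero, Matrix.cons_val_one,
    Matrix.head_cons, Matrix.empty_val', Matrix.cons_val_fin_one, Matrix.head_fin_const]
    at h00 h01 h10 h11
  have hδ1 : ‖δ * lam‖ = 1 := by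
    rcases hδ with h | h <;> simp [h, hlam]
  have hb : ‖A 0 1‖ < ε := by simpa using h01
  have hc : ‖A 1 0‖ < ε := by simpa using h10
  have ha : ‖A 0 0 - lam‖ < ε := by simpa using h00
  have hd : ‖A 1 1 - δ * lam‖ < ε := by simpa using h11
  have ha_up : ‖A 0 0‖ ≤ 1 + ε := by
    have h := norm_sub_le (A 0 0 - lam) (-lam)
    simp only [sub_neg_eq_add, sub_add_cancel, norm_neg] at h
    rw [hlam] at h
    linarith [ha]
  have ha_lo : 1 - ε ≤ ‖A 0 0‖ := by
    have h : ‖lam‖ - ‖A 0 0‖ ≤ ‖A 0 0 - lam‖ := by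
      rw [norm_sub_rev]; exact norm_sub_norm_le lam (A 0 0)
    rw [hlam] at h
    linarith [ha]
  have hd_up : ‖A 1 1‖ ≤ 1 + ε := by
    have h := norm_sub_le (A 1 1 - δ * lam) (-(δ * lam))
    simp only [sub_neg_eq_add, sub_add_cancel, norm_neg] at h
    rw [hδ1] at h
    linarith [hd]
  have hd_lo : 1 - ε ≤ ‖A 1 1‖ := by
    have h : ‖δ * lam‖ - ‖A 1 1‖ ≤ ‖A 1 1 - δ * lam‖ := by
      rw [norm_sub_rev]; exact norm_sub_norm_le (δ * lam) (A 1 1)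
    rw [hδ1] at h
    linarith [hd]
  -- the key polynomial identity from the congruence
  obtain ⟨hI, hII⟩ := congr_tr_det A S !![0, 1; σ, 0] hS
  have hBtr : trace (adjugate (!![0,1;σ,0] : Matrix (Fin 2) (Fin 2) ℂ)ᴴ * !![0,1;σ,0])
      = -(σ * star σ + 1) := by
    simp [adjugate_fin_two, trace_fin_two, Matrix.mul_apply, Fin.sum_univ_two,
      conjTranspose_apply, Matrix.vecMul, dotProduct]
    ring
  have hBdet : (!![0,1;σ,0] : Matrix (Fin 2) (Fin 2) ℂ).det = -σ := by
    simp [Matrix.det_fin_two]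
  rw [hBtr] at hI
  rw [hBdet] at hII
  set t : ℂ := trace (adjugate Aᴴ * A) with htdef
  have hkey : (σ * star σ + 1) * A.det = σ * t := by
    linear_combination (-(A.det)) * hI + t * hII
  -- take absolute values
  have habs : (s ^ 2 + 1) * ‖A.det‖ = s * ‖t‖ := by
    have h := congrArg norm hkey
    rw [norm_mul, norm_mul, ← hsdef] at h
    have h2 : σ * star σ + 1 = ((s ^ 2 + 1 : ℝ) : ℂ) := by
      rw [Complex.star_def, Complex.mul_conj, ← Complex.sq_norm, ← hsdef]
      push_cast
      ring
    rw [h2, Complex.norm_real, Real.norm_eq_abs, abs_of_pos (by positivity)] at h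
    exact h
  -- bound |det A| from below
  have hdet_lo : 1 - 2 * ε ≤ ‖A.det‖ := by
    have hdet : A.det = A 0 0 * A 1 1 - A 0 1 * A 1 0 := Matrix.det_fin_two A
    rw [hdet]
    have h1 := norm_sub_norm_le (A 0 0 * A 1 1) (A 0 0 * A 1 1 - A 0 1 * A 1 0)
    simp only [sub_sub_cancel] at h1
    simp only [norm_mul] at h1
    have hbc : ‖A 0 1‖ * ‖A 1 0‖ ≤ ε * ε :=
      mul_le_mul hb.le hc.le (norm_nonneg _) hε0.le
    have had : (1 - ε) * (1 - ε) ≤ ‖A 0 0‖ * ‖A 1 1‖ :=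
      mul_le_mul ha_lo hd_lo (by linarith) (norm_nonneg _)
    nlinarith [norm_nonneg (A 0 0 * A 1 1 - A 0 1 * A 1 0), hε0]
  -- bound |t| from above
  have ht_up : ‖t‖ ≤ 2 * (1 + ε) ^ 2 + 2 * ε ^ 2 := by
    have ht : t = star (A 1 1) * A 0 0 - star (A 1 0) * A 1 0 - star (A 0 1) * A 0 1
        + star (A 0 0) * A 1 1 := by
      rw [htdef]
      simp [adjugate_fin_two, trace_fin_two, Matrix.mul_apply, Fin.sum_univ_two,
        conjTranspose_apply, Matrix.vecMul, dotProduct]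
      ring
    rw [ht]
    simp only [Complex.star_def]
    have e1 := norm_add_le
      ((starRingEnd ℂ) (A 1 1) * A 0 0 - (starRingEnd ℂ) (A 1 0) * A 1 0 - (starRingEnd ℂ) (A 0 1) * A 0 1)
      ((starRingEnd ℂ) (A 0 0) * A 1 1)
    have e2 := norm_sub_le
      ((starRingEnd ℂ) (A 1 1) * A 0 0 - (starRingEnd ℂ) (A 1 0) * A 1 0) ((starRingEnd ℂ) (A 0 1) * A 0 1)
    have e3 := norm_sub_le ((starRingEnd ℂ) (A 1 1) * A 0 0) ((starRingEnd ℂ) (A 1 0) * A 1 0)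
    simp only [norm_mul, Complex.star_def, Complex.norm_conj] at e1 e2 e3
    have b1 : ‖A 1 1‖ * ‖A 0 0‖ ≤ (1 + ε) * (1 + ε) :=
      mul_le_mul hd_up ha_up (norm_nonneg _) (by linarith)
    have b2 : ‖A 1 0‖ * ‖A 1 0‖ ≤ ε * ε :=
      mul_le_mul hc.le hc.le (norm_nonneg _) hε0.le
    have b3 : ‖A 0 1‖ * ‖A 0 1‖ ≤ ε * ε :=
      mul_le_mul hb.le hb.le (norm_nonneg _) hε0.le
    have b4 : ‖A 0 0‖ * ‖A 1 1‖ ≤ (1 + ε) * (1 + ε) :=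
      mul_le_mul ha_up hd_up (norm_nonneg _) (by linarith)
    nlinarith
  -- final contradiction
  have hfinal : (s ^ 2 + 1) * (1 - 2 * ε) ≤ s * (2 * (1 + ε) ^ 2 + 2 * ε ^ 2) := by
    calc (s ^ 2 + 1) * (1 - 2 * ε)
        ≤ (s ^ 2 + 1) * ‖A.det‖ :=
          mul_le_mul_of_nonneg_left hdet_lo (by positivity)
      _ = s * ‖t‖ := habs
      _ ≤ s * (2 * (1 + ε) ^ 2 + 2 * ε ^ 2) := mul_le_mul_of_nonneg_left ht_up hs0
  exact final_ineq s ε hs0 hσ hεdef hfinal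
end

section
/- Let λ, μ, ν be unimodular with μ ≠ ν and μ ≠ −ν, and δ ∈ {1,−1}. Then there is an ε > 0 such that no matrix A with ‖A − diag(λ, δλ)‖ < ε is *congruent to diag(μ,ν). -/
set_option maxHeartbeats 1000000
attribute [local fun_prop] Complex.continuous_conj


open Matrix

noncomputable def phiInv (C a b c d : ℂ) : ℂ :=
  (d * (starRingEnd ℂ) a + a * (starRingEnd ℂ) d - b * (starRingEnd ℂ) b
      - c * (starRingEnd ℂ) c) ^ 2
    - (4 + C) * (a * d - b * c) *
      ((starRingEnd ℂ) a * (starRingEnd ℂ) d - (starRingEnd ℂ) b * (starRingEnd ℂ) c)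

lemma phiInv_eq (C : ℂ) (A : Matrix (Fin 2) (Fin 2) ℂ) :
    phiInv C (A 0 0) (A 0 1) (A 1 0) (A 1 1)
      = (Matrix.trace (A.adjugate * Aᴴ)) ^ 2 - (4 + C) * A.det * Aᴴ.det := by
  simp [phiInv, Matrix.trace_fin_two, Matrix.mul_apply, Fin.sum_univ_two,
    Matrix.adjugate_fin_two, Matrix.det_fin_two, Matrix.conjTranspose_apply,
    Matrix.vecMul, dotProduct]
  ring

lemma trace_adj_congr (S A : Matrix (Fin 2) (Fin 2) ℂ) :
    Matrix.trace (adjugate (Sᴴ * A * S) * (Sᴴ * A * S)ᴴ)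
      = Sᴴ.det * S.det * Matrix.trace (A.adjugate * Aᴴ) := by
  have key : adjugate (Sᴴ * A * S) * (Sᴴ * A * S)ᴴ
      = adjugate S * (adjugate A * ((adjugate Sᴴ * Sᴴ) * (Aᴴ * S))) := by
    rw [Matrix.adjugate_mul_distrib, Matrix.adjugate_mul_distrib,
      Matrix.conjTranspose_mul, Matrix.conjTranspose_mul, conjTranspose_conjTranspose]
    simp only [Matrix.mul_assoc]
  rw [key, Matrix.adjugate_mul]
  simp only [Matrix.smul_mul, Matrix.mul_smul, Matrix.one_mul, Matrix.trace_smul, smul_eq_mul]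
  rw [Matrix.trace_mul_comm]
  simp only [Matrix.mul_assoc]
  rw [Matrix.mul_adjugate]
  simp only [Matrix.mul_smul, Matrix.mul_one, Matrix.trace_smul, smul_eq_mul]
  ring

theorem no_arrow_diag_to_diag_mu_nu (lam μ ν : ℂ) (δ : ℂ)
    (hlam : ‖lam‖ = 1) (hμ : ‖μ‖ = 1) (hν : ‖ν‖ = 1)
    (hμν : μ ≠ ν) (hμν' : μ ≠ -ν) (hδ : δ = 1 ∨ δ = -1) :
    ∃ ε : ℝ, 0 < ε ∧ ∀ A : Matrix (Fin 2) (Fin 2) ℂ,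
      (∀ i j, ‖(A - !![lam, 0; 0, δ * lam]) i j‖ < ε) →
      ¬ ∃ S : Matrix (Fin 2) (Fin 2) ℂ, S.det ≠ 0 ∧ Sᴴ * A * S = !![μ, 0; 0, ν] := by
  have hμ0 : μ ≠ 0 := by intro h; simp [h] at hμ
  have hν0 : ν ≠ 0 := by intro h; simp [h] at hν
  have hlam0 : lam ≠ 0 := by intro h; simp [h] at hlam
  have hμ1 : μ * (starRingEnd ℂ) μ = 1 := by
    rw [Complex.mul_conj, Complex.normSq_eq_norm_sq, hμ]; norm_num
  have hν1 : ν * (starRingEnd ℂ) ν = 1 := by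
    rw [Complex.mul_conj, Complex.normSq_eq_norm_sq, hν]; norm_num
  have hlam1 : lam * (starRingEnd ℂ) lam = 1 := by
    rw [Complex.mul_conj, Complex.normSq_eq_norm_sq, hlam]; norm_num
  have hμc : (starRingEnd ℂ) μ = μ⁻¹ := eq_inv_of_mul_eq_one_left (by rw [mul_comm]; exact hμ1)
  have hνc : (starRingEnd ℂ) ν = ν⁻¹ := eq_inv_of_mul_eq_one_left (by rw [mul_comm]; exact hν1)
  have hlamc : (starRingEnd ℂ) lam = lam⁻¹ :=
    eq_inv_of_mul_eq_one_left (by rw [mul_comm]; exact hlam1)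
  set C : ℂ := (μ ^ 2 - ν ^ 2) ^ 2 / (μ * ν) ^ 2 with hC
  have hCne : C ≠ 0 := by
    apply div_ne_zero
    · apply pow_ne_zero
      intro h
      have h2 : (μ - ν) * (μ + ν) = 0 := by linear_combination h
      rcases mul_eq_zero.mp h2 with h3 | h3
      · exact hμν (by linear_combination h3)
      · exact hμν' (by linear_combination h3)
    · exact pow_ne_zero _ (mul_ne_zero hμ0 hν0)
  -- value at the limit point
  have hphi0 : phiInv C lam 0 0 (δ * lam) = -C := by
    have hδc : (starRingEnd ℂ) δ = δ := by rcases hδ with h | h <;> simp [h]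
    have hδ2 : δ * δ = 1 := by rcases hδ with h | h <;> simp [h]
    simp only [phiInv, _root_.map_mul, hδc, map_zero, mul_zero, sub_zero, zero_mul]
    linear_combination (-C * (lam * (starRingEnd ℂ) lam) ^ 2) * hδ2 +
      (-C * (lam * (starRingEnd ℂ) lam + 1)) * hlam1
  have hD0 : phiInv C μ 0 0 ν = 0 := by
    simp only [phiInv, map_zero, mul_zero, sub_zero, zero_mul]
    rw [hμc, hνc, hC]
    field_simp
    ring
  -- continuity
  have hcont : Continuous (fun p : ℂ × ℂ × ℂ × ℂ => phiInv C p.1 p.2.1 p.2.2.1 p.2.2.2) := by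
    unfold phiInv
    fun_prop
  obtain ⟨ε, hε, hball⟩ := Metric.continuousAt_iff.mp
    (hcont.continuousAt (x := (lam, 0, 0, δ * lam))) ‖C‖ (norm_pos_iff.mpr hCne)
  refine ⟨ε, hε, fun A hA h => ?_⟩
  obtain ⟨S, hS, hcong⟩ := h
  -- entrywise closeness gives closeness of tuples
  have h00 := hA 0 0
  have h01 := hA 0 1
  have h10 := hA 1 0
  have h11 := hA 1 1
  simp [Matrix.sub_apply] at h00 h01 h10 h11
  have hdist : dist ((A 0 0, A 0 1, A 1 0, A 1 1) : ℂ × ℂ × ℂ × ℂ) (lam, 0, 0, δ * lam) < ε := by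
    rw [Prod.dist_eq, Prod.dist_eq, Prod.dist_eq]
    simp only [Complex.dist_eq, sub_zero]
    apply max_lt h00 (max_lt h01 (max_lt h10 h11))
  have hclose := hball hdist
  -- phiInv vanishes on matrices *congruent to diag(μ, ν)
  have hk : Sᴴ.det * S.det ≠ 0 := by
    refine mul_ne_zero ?_ hS
    rw [Matrix.det_conjTranspose]
    exact star_ne_zero.mpr hS
  set k := Sᴴ.det * S.det with hkdef
  set D : Matrix (Fin 2) (Fin 2) ℂ := !![μ, 0; 0, ν] with hDdef
  have h1 : Matrix.trace (adjugate D * Dᴴ) = k * Matrix.trace (A.adjugate * Aᴴ) := by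
    rw [← hcong]; exact trace_adj_congr S A
  have h2 : D.det = k * A.det := by
    rw [← hcong, Matrix.det_mul, Matrix.det_mul]; ring
  have h3 : Dᴴ.det = k * Aᴴ.det := by
    rw [Matrix.det_conjTranspose, Matrix.det_conjTranspose, h2, hkdef, Matrix.det_conjTranspose,
      star_mul', star_mul', star_star]
    ring
  have hDphi : (Matrix.trace (D.adjugate * Dᴴ)) ^ 2 - (4 + C) * D.det * Dᴴ.det = 0 := by
    rw [← phiInv_eq]
    have : D 0 0 = μ ∧ D 0 1 = 0 ∧ D 1 0 = 0 ∧ D 1 1 = ν := by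
      refine ⟨?_, ?_, ?_, ?_⟩ <;> simp [hDdef]
    rw [this.1, this.2.1, this.2.2.1, this.2.2.2]
    exact hD0
  have hAphi : phiInv C (A 0 0) (A 0 1) (A 1 0) (A 1 1) = 0 := by
    rw [phiInv_eq]
    have hk2 : k ^ 2 * ((Matrix.trace (A.adjugate * Aᴴ)) ^ 2 - (4 + C) * A.det * Aᴴ.det) = 0 := by
      rw [h1, h2, h3] at hDphi
      linear_combination hDphi
    rcases mul_eq_zero.mp hk2 with h | h
    · exact absurd h (pow_ne_zero _ hk)
    · exact h
  -- contradiction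
  simp only at hclose
  rw [hAphi, hphi0, Complex.dist_eq] at hclose
  simp at hclose
end

section
/- If A and B are invertible n×n complex matrices that are *congruent, then (A^{-1})* A and (B^{-1})* B are similar matrices. -/
open Matrix

theorem congruent_implies_cosquare_similar (n : ℕ) (A B : Matrix (Fin n) (Fin n) ℂ)
    (hA : IsUnit A.det) (hB : IsUnit B.det)
    (h : ∃ S : Matrix (Fin n) (Fin n) ℂ, S.det ≠ 0 ∧ Sᴴ * A * S = B) :
    ∃ T : Matrix (Fin n) (Fin n) ℂ, T.det ≠ 0 ∧
      (B⁻¹)ᴴ * B = T⁻¹ * ((A⁻¹)ᴴ * A) * T := by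
  obtain ⟨S, hS, rfl⟩ := h
  refine ⟨S, hS, ?_⟩
  have hSu : IsUnit S.det := isUnit_iff_ne_zero.mpr hS
  have hSHu : IsUnit Sᴴ.det := by
    rw [Matrix.det_conjTranspose]; exact hSu.star
  have hB' : (Sᴴ * A * S)ᴴ = Sᴴ * Aᴴ * S := by
    simp [Matrix.conjTranspose_mul, Matrix.mul_assoc]
  rw [Matrix.conjTranspose_nonsing_inv, Matrix.conjTranspose_nonsing_inv, hB',
    Matrix.mul_inv_rev, Matrix.mul_inv_rev]
  calc S⁻¹ * (Aᴴ⁻¹ * Sᴴ⁻¹) * (Sᴴ * A * S)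
      = S⁻¹ * Aᴴ⁻¹ * (Sᴴ⁻¹ * Sᴴ) * (A * S) := by noncomm_ring
    _ = S⁻¹ * (Aᴴ⁻¹ * A) * S := by
        rw [Matrix.nonsing_inv_mul _ hSHu]; noncomm_ring
end

section
/- Let λ, τ be unimodular complex numbers. Then there is an ε > 0 such that no matrix A with ‖A − diag(λ,λ)‖ < ε is *congruent to τ·[[0,1],[1,i]]. -/
open Matrix

theorem no_arrow_diag_lambda_lambda_to_tau_block (lam τ : ℂ)
    (hlam : ‖lam‖ = 1) (hτ : ‖τ‖ = 1) :
    ∃ ε : ℝ, 0 < ε ∧ ∀ A : Matrix (Fin 2) (Fin 2) ℂ,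
      (∀ i j, ‖(A - !![lam, 0; 0, lam]) i j‖ < ε) →
      ¬ ∃ S : Matrix (Fin 2) (Fin 2) ℂ, S.det ≠ 0 ∧
        Sᴴ * A * S = τ • !![0, 1; 1, Complex.I] := by
  refine ⟨1/2, by norm_num, fun A hA h => ?_⟩
  obtain ⟨S, hSdet, hS⟩ := h
  set B : Matrix (Fin 2) (Fin 2) ℂ := !![0, 1; 1, Complex.I] with hB
  set μ : ℂ := starRingEnd ℂ lam * τ with hμ
  have hS' : Sᴴ * Aᴴ * S = (starRingEnd ℂ τ) • Bᴴ := by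
    calc Sᴴ * Aᴴ * S = (Sᴴ * A * S)ᴴ := by
          simp [Matrix.conjTranspose_mul, Matrix.mul_assoc]
      _ = (starRingEnd ℂ τ) • Bᴴ := by
          rw [hS, Matrix.conjTranspose_smul, Complex.star_def]
  have hH : Sᴴ * ((starRingEnd ℂ lam) • A + lam • Aᴴ) * S
      = μ • B + (starRingEnd ℂ μ) • Bᴴ := by
    rw [Matrix.mul_add, Matrix.add_mul, Matrix.mul_smul, Matrix.smul_mul,
      Matrix.mul_smul, Matrix.smul_mul, hS, hS', smul_smul, smul_smul]
    rw [hμ, _root_.map_mul, Complex.conj_conj, mul_comm lam (starRingEnd ℂ τ)]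
  have hdet := congrArg Matrix.det hH
  rw [Matrix.det_mul, Matrix.det_mul, Matrix.det_conjTranspose] at hdet
  set dH : ℂ := ((starRingEnd ℂ lam) • A + lam • Aᴴ).det with hdH
  have hRHS : (μ • B + (starRingEnd ℂ μ) • Bᴴ).det = -(μ + starRingEnd ℂ μ)^2 := by
    simp only [hB, Matrix.det_fin_two, Matrix.add_apply, Matrix.smul_apply,
      Matrix.conjTranspose_apply, smul_eq_mul, Matrix.cons_val', Matrix.cons_val_zero,
      Matrix.cons_val_one, Matrix.head_cons, Matrix.head_fin_const, Matrix.empty_val',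
      Matrix.cons_val_fin_one, Matrix.of_apply, Complex.star_def, _root_.map_one, _root_.map_zero,
      Complex.conj_I]
    ring
  rw [hRHS] at hdet
  simp only [Complex.star_def] at hdet
  have h1 : (Complex.normSq S.det : ℂ) * dH = -(μ + starRingEnd ℂ μ)^2 := by
    rw [Complex.normSq_eq_conj_mul_self]
    linear_combination hdet
  rw [Complex.add_conj] at h1
  rw [show -(((2 * μ.re : ℝ) : ℂ))^2 = ((-(2 * μ.re)^2 : ℝ) : ℂ) from by push_cast; ring] at h1
  have h2 : Complex.normSq S.det * dH.re = -(2 * μ.re)^2 := by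
    have := congrArg Complex.re h1
    rwa [Complex.re_ofReal_mul, Complex.ofReal_re] at this
  have hdHval : dH = (starRingEnd ℂ lam * A 0 0 + lam * starRingEnd ℂ (A 0 0)) *
      (starRingEnd ℂ lam * A 1 1 + lam * starRingEnd ℂ (A 1 1)) -
      (starRingEnd ℂ lam * A 0 1 + lam * starRingEnd ℂ (A 1 0)) *
      (starRingEnd ℂ lam * A 1 0 + lam * starRingEnd ℂ (A 0 1)) := by
    rw [hdH, Matrix.det_fin_two]
    simp only [Matrix.add_apply, Matrix.smul_apply, Matrix.conjTranspose_apply,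
      smul_eq_mul, Complex.star_def]
  set u : ℂ := starRingEnd ℂ lam * A 0 0 with hu
  set v : ℂ := starRingEnd ℂ lam * A 1 1 with hv
  set b : ℂ := starRingEnd ℂ lam * A 0 1 + lam * starRingEnd ℂ (A 1 0) with hb
  have hdHval2 : dH = (u + starRingEnd ℂ u) * (v + starRingEnd ℂ v) - b * starRingEnd ℂ b := by
    rw [hdHval]
    simp only [hu, hv, hb, map_add, _root_.map_mul, Complex.conj_conj]
    ring
  have hdHre : dH.re = (2 * u.re) * (2 * v.re) - Complex.normSq b := by
    rw [hdHval2, Complex.add_conj, Complex.add_conj, Complex.mul_conj]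
    simp
  have key : ∀ i j, ‖A i j - !![lam, 0; 0, lam] i j‖ < 1/2 := by
    intro i j
    simpa [Matrix.sub_apply] using hA i j
  have h00 : ‖A 0 0 - lam‖ < 1/2 := by simpa using key 0 0
  have h11 : ‖A 1 1 - lam‖ < 1/2 := by simpa using key 1 1
  have h01 : ‖A 0 1‖ < 1/2 := by simpa using key 0 1
  have h10 : ‖A 1 0‖ < 1/2 := by simpa using key 1 0
  have hlam1 : starRingEnd ℂ lam * lam = 1 := by
    rw [mul_comm, Complex.mul_conj]
    norm_cast
    rw [Complex.normSq_eq_norm_sq, hlam]; norm_num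
  have hconjabs : ‖starRingEnd ℂ lam‖ = 1 := by
    rw [Complex.norm_conj]; exact hlam
  have hure : 1/2 < u.re := by
    have habs : ‖u - 1‖ < 1/2 := by
      have huu : u - 1 = starRingEnd ℂ lam * (A 0 0 - lam) := by
        rw [hu, mul_sub, hlam1]
      rw [huu, norm_mul, hconjabs, one_mul]
      exact h00
    have hle := Complex.abs_re_le_norm (u - 1)
    have hre : |(u - 1).re| < 1/2 := lt_of_le_of_lt hle habs
    have hh : (u - 1).re = u.re - 1 := by simp
    rw [hh] at hre
    cases abs_lt.mp hre with
    | intro hl hr => linarith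
  have hvre : 1/2 < v.re := by
    have habs : ‖v - 1‖ < 1/2 := by
      have hvv : v - 1 = starRingEnd ℂ lam * (A 1 1 - lam) := by
        rw [hv, mul_sub, hlam1]
      rw [hvv, norm_mul, hconjabs, one_mul]
      exact h11
    have hle := Complex.abs_re_le_norm (v - 1)
    have hre : |(v - 1).re| < 1/2 := lt_of_le_of_lt hle habs
    have hh : (v - 1).re = v.re - 1 := by simp
    rw [hh] at hre
    cases abs_lt.mp hre with
    | intro hl hr => linarith
  have hbabs : ‖b‖ < 1 := by
    calc ‖b‖ ≤ ‖starRingEnd ℂ lam * A 0 1‖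
          + ‖lam * starRingEnd ℂ (A 1 0)‖ := norm_add_le _ _
      _ = ‖A 0 1‖ + ‖A 1 0‖ := by
          rw [norm_mul, norm_mul, hconjabs, hlam, Complex.norm_conj, one_mul, one_mul]
      _ < 1 := by linarith
  have hbn : Complex.normSq b < 1 := by
    rw [Complex.normSq_eq_norm_sq]
    nlinarith [norm_nonneg b]
  have hdHpos : 0 < dH.re := by
    rw [hdHre]; nlinarith
  have hnpos : 0 < Complex.normSq S.det := Complex.normSq_pos.mpr hSdet
  nlinarith [mul_pos hnpos hdHpos, sq_nonneg (2 * μ.re)]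
end
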